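/- Let T be an ℝ-tree, z ∈ T, and A ⊆ T a nonempty subset. Then there exists a unique point y ∈ T such that ⋂_{a ∈ A} [z, a] = [z, y], where [z, a] denotes the (unique) geodesic segment from z to a. -/

import Mathlib

open Metric Set

/-- `f : S → T` is a quasi-isometry with constant `N` (a positive natural number):
every point of `T` lies within distance `N` of the image of `f`, and
`(1/N) d(x,y) - N ≤ d(f x, f y) ≤ N d(x,y) + N` for all `x y`. -/
def IsQuasiIsometryWith {S T : Type*} [MetricSpace S] [MetricSpace T]
    (N : ℕ) (f : S → T) : Prop :=
  0 < N ∧ (∀ t : T, ∃ s : S, dist t (f s) ≤ (N : ℝ)) ∧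
    ∀ x y : S, (1 / (N : ℝ)) * dist x y - N ≤ dist (f x) (f y) ∧
      dist (f x) (f y) ≤ (N : ℝ) * dist x y + N

/-- `f` is a quasi-isometry if it is a quasi-isometry with constant `N` for some `N`. -/
def IsQuasiIsometry {S T : Type*} [MetricSpace S] [MetricSpace T] (f : S → T) : Prop :=
  ∃ N : ℕ, IsQuasiIsometryWith N f
/-- `σ` is a geodesic segment from `x` to `y`: the image of an isometric embedding
`ρ : [0, d(x,y)] → X` with `ρ 0 = x` and `ρ (d(x,y)) = y`. -/
def IsGeodesicSegment {X : Type*} [MetricSpace X] (σ : Set X) (x y : X) : Prop :=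
  ∃ ρ : ℝ → X,
    (∀ s ∈ Icc (0 : ℝ) (dist x y), ∀ t ∈ Icc (0 : ℝ) (dist x y),
      dist (ρ s) (ρ t) = |s - t|) ∧
    ρ 0 = x ∧ ρ (dist x y) = y ∧ σ = ρ '' Icc (0 : ℝ) (dist x y)

/-- A metric space is geodesic if any two points are joined by a geodesic segment. -/
def IsGeodesicSpace (X : Type*) [MetricSpace X] : Prop :=
  ∀ x y : X, ∃ σ : Set X, IsGeodesicSegment σ x y

/-- A geodesic space is `δ`-hyperbolic if for all `x, y, z` and all choices of geodesic
segments, `[x,y] ⊆ B([x,z] ∪ [y,z], δ)`. -/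
def IsDeltaHyperbolic (X : Type*) [MetricSpace X] (δ : ℝ) : Prop :=
  ∀ x y z : X, ∀ σxy σxz σyz : Set X,
    IsGeodesicSegment σxy x y → IsGeodesicSegment σxz x z → IsGeodesicSegment σyz y z →
      ∀ w ∈ σxy, infDist w (σxz ∪ σyz) ≤ δ

/-- An ℝ-tree is a `0`-hyperbolic geodesic metric space. -/
def IsRTree (X : Type*) [MetricSpace X] : Prop :=
  IsGeodesicSpace X ∧ IsDeltaHyperbolic X 0

/-- A path from `x` to `y`: a continuous map `γ : [0,1] → X` with `γ 0 = x`, `γ 1 = y`. -/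
def IsPathBetween {X : Type*} [MetricSpace X] (γ : ℝ → X) (x y : X) : Prop :=
  ContinuousOn γ (Icc (0 : ℝ) 1) ∧ γ 0 = x ∧ γ 1 = y
lemma IsGeodesicSegment.right_mem' {X : Type*} [MetricSpace X] {σ : Set X} {x y : X}
    (h : IsGeodesicSegment σ x y) : y ∈ σ := by
  obtain ⟨ρ, -, -, hy, hσ⟩ := h
  rw [hσ]
  exact ⟨dist x y, ⟨dist_nonneg, le_refl _⟩, hy⟩

lemma IsGeodesicSegment.left_mem' {X : Type*} [MetricSpace X] {σ : Set X} {x y : X}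
    (h : IsGeodesicSegment σ x y) : x ∈ σ := by
  obtain ⟨ρ, -, hx, -, hσ⟩ := h
  rw [hσ]
  exact ⟨0, ⟨le_refl _, dist_nonneg⟩, hx⟩

lemma IsGeodesicSegment.compact' {X : Type*} [MetricSpace X] {σ : Set X} {x y : X}
    (h : IsGeodesicSegment σ x y) : IsCompact σ := by
  obtain ⟨ρ, hiso, -, -, hσ⟩ := h
  have hc : ContinuousOn ρ (Icc 0 (dist x y)) := by
    have : LipschitzOnWith 1 ρ (Icc 0 (dist x y)) := by
      rw [lipschitzOnWith_iff_dist_le_mul]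
      intro s hs t ht
      rw [hiso s hs t ht]
      simp [Real.dist_eq]
    exact this.continuousOn
  rw [hσ]
  exact isCompact_Icc.image_of_continuousOn hc

lemma geo_singleton {X : Type*} [MetricSpace X] (y : X) :
    IsGeodesicSegment {y} y y := by
  refine ⟨fun _ => y, ?_, rfl, rfl, ?_⟩
  · intro s hs t ht
    simp only [dist_self] at hs ht ⊢
    have hs0 : s = 0 := le_antisymm hs.2 hs.1
    have ht0 : t = 0 := le_antisymm ht.2 ht.1
    simp [hs0, ht0]
  · simp

lemma geodesic_unique {X : Type*} [MetricSpace X] (hδ : IsDeltaHyperbolic X 0)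
    {σ σ' : Set X} {x y : X} (h : IsGeodesicSegment σ x y) (h' : IsGeodesicSegment σ' x y) :
    σ = σ' := by
  have key : ∀ τ τ' : Set X, IsGeodesicSegment τ x y → IsGeodesicSegment τ' x y → τ ⊆ τ' := by
    intro τ τ' hτ hτ' w hw
    have hle := hδ x y y τ τ' {y} hτ hτ' (geo_singleton y) w hw
    have hcl : IsClosed (τ' ∪ {y}) := (hτ'.compact'.union isCompact_singleton).isClosed
    have hne : (τ' ∪ {y}).Nonempty := ⟨y, Or.inr rfl⟩
    have hmem : w ∈ τ' ∪ {y} := by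
      rw [hcl.mem_iff_infDist_zero hne]
      exact le_antisymm hle infDist_nonneg
    rcases hmem with h1 | h1
    · exact h1
    · rw [mem_singleton_iff] at h1
      rw [h1]; exact hτ'.right_mem'
  exact le_antisymm (key σ σ' h h') (key σ' σ h' h)

lemma IsGeodesicSegment.dist_le' {X : Type*} [MetricSpace X] {σ : Set X} {x y p : X}
    (h : IsGeodesicSegment σ x y) (hp : p ∈ σ) : dist x p ≤ dist x y := by
  obtain ⟨ρ, hiso, hx, -, hσ⟩ := h
  rw [hσ] at hp
  obtain ⟨u, hu, rfl⟩ := hp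
  have hd : dist x (ρ u) = u := by
    conv_lhs => rw [← hx]
    rw [hiso 0 ⟨le_refl _, dist_nonneg⟩ u hu, zero_sub, abs_neg, abs_of_nonneg hu.1]
  rw [hd]
  exact hu.2

lemma endpoint_unique {X : Type*} [MetricSpace X] {σ : Set X} {x y y' : X}
    (h : IsGeodesicSegment σ x y) (h' : IsGeodesicSegment σ x y') : y = y' := by
  have h1 : dist x y' ≤ dist x y := h.dist_le' h'.right_mem'
  have h2 : dist x y ≤ dist x y' := h'.dist_le' h.right_mem'
  have heq : dist x y' = dist x y := le_antisymm h1 h2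
  have hy'σ : y' ∈ σ := h'.right_mem'
  obtain ⟨ρ, hiso, hx, hy, hσ⟩ := h
  rw [hσ] at hy'σ
  obtain ⟨u, hu, huy⟩ := hy'σ
  have hdu : dist x y' = u := by
    rw [← huy, ← hx, hiso 0 ⟨le_refl _, dist_nonneg⟩ u hu, zero_sub, abs_neg,
      abs_of_nonneg hu.1]
  have hud : u = dist x y := by rw [← hdu, heq]
  rw [← huy, hud, hy]

/-- Initial segment lemma: if a point of another geodesic from z lies on ρ at time t,
then all earlier points of ρ lie on that geodesic too. -/
lemma initial_seg {X : Type*} [MetricSpace X] (hδ : IsDeltaHyperbolic X 0)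
    {ρ : ℝ → X} {L : ℝ} {z : X}
    (hiso : ∀ s ∈ Icc (0:ℝ) L, ∀ t ∈ Icc (0:ℝ) L, dist (ρ s) (ρ t) = |s - t|)
    (hz : ρ 0 = z) {σa : Set X} {a : X} (ha : IsGeodesicSegment σa z a)
    {t : ℝ} (ht : t ∈ Icc (0:ℝ) L) (hmem : ρ t ∈ σa) {s : ℝ} (hs : s ∈ Icc (0:ℝ) t) :
    ρ s ∈ σa := by
  have hL0 : (0:ℝ) ≤ L := le_trans ht.1 ht.2
  obtain ⟨ρa, hisoa, hza, haa, hσa⟩ := ha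
  rw [hσa] at hmem
  obtain ⟨u, hu, huw⟩ := hmem
  have hdt : dist z (ρ t) = t := by
    rw [← hz, hiso 0 ⟨le_refl _, hL0⟩ t ht, zero_sub, abs_neg, abs_of_nonneg ht.1]
  have hdu : dist z (ρa u) = u := by
    rw [← hza, hisoa 0 ⟨le_refl _, dist_nonneg⟩ u hu, zero_sub, abs_neg, abs_of_nonneg hu.1]
  have hut : u = t := by rw [← hdu, huw, hdt]
  set w := ρ t with hw
  have hdzw : dist z w = t := hdt
  have hsub1 : Icc (0:ℝ) t ⊆ Icc 0 L := Icc_subset_Icc (le_refl _) ht.2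
  have hsub2 : Icc (0:ℝ) t ⊆ Icc 0 (dist z a) := Icc_subset_Icc (le_refl _) (hut ▸ hu.2)
  have hg1 : IsGeodesicSegment (ρ '' Icc 0 t) z w := by
    refine ⟨ρ, ?_, hz, ?_, ?_⟩ <;> rw [hdzw]
    · intro s1 hs1 t1 ht1
      exact hiso s1 (hsub1 hs1) t1 (hsub1 ht1)
  have hg2 : IsGeodesicSegment (ρa '' Icc 0 t) z w := by
    refine ⟨ρa, ?_, hza, ?_, ?_⟩ <;> rw [hdzw]
    · intro s1 hs1 t1 ht1
      exact hisoa s1 (hsub2 hs1) t1 (hsub2 ht1)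
    · rw [← hut, huw]
  have heqset : ρ '' Icc 0 t = ρa '' Icc 0 t := geodesic_unique hδ hg1 hg2
  have : ρ s ∈ ρa '' Icc 0 t := heqset ▸ mem_image_of_mem ρ hs
  rw [hσa]
  exact image_mono (f := ρa) hsub2 this

/-- in an ℝ-tree `T`, for `z ∈ T` and a nonempty `A ⊆ T` there is a unique
`y ∈ T` with `⋂_{a ∈ A} [z, a] = [z, y]` (geodesic segments being unique in `T`). -/
theorem rTree_inter_geodesics {T : Type*} [MetricSpace T] (hT : IsRTree T)
    (z : T) (A : Set T) (hA : A.Nonempty) :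
    ∃! y : T, ∀ seg : T → Set T,
      (∀ a ∈ A, IsGeodesicSegment (seg a) z a) →
        ∀ σ : Set T, IsGeodesicSegment σ z y → (⋂ a ∈ A, seg a) = σ := by
  obtain ⟨hgeo, hδ⟩ := hT
  choose geo hgeoA using fun a => hgeo z a
  obtain ⟨a0, ha0⟩ := hA
  obtain ⟨ρ, hiso, hz, ha0', hσ0⟩ := hgeoA a0
  set L := dist z a0 with hL
  have hL0 : (0:ℝ) ≤ L := dist_nonneg
  have hdist : ∀ t ∈ Icc (0:ℝ) L, dist z (ρ t) = t := by
    intro t ht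
    rw [← hz, hiso 0 ⟨le_refl _, hL0⟩ t ht, zero_sub, abs_neg, abs_of_nonneg ht.1]
  set M : Set ℝ := {t | t ∈ Icc (0:ℝ) L ∧ ∀ a ∈ A, ρ t ∈ geo a} with hM
  have h0M : (0:ℝ) ∈ M := by
    refine ⟨⟨le_refl _, hL0⟩, fun a ha => ?_⟩
    rw [hz]
    exact (hgeoA a).left_mem'
  have hMne : M.Nonempty := ⟨0, h0M⟩
  have hMbdd : BddAbove M := ⟨L, fun t ht => ht.1.2⟩
  have hcont : ContinuousOn ρ (Icc 0 L) := by
    have : LipschitzOnWith 1 ρ (Icc 0 L) := by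
      rw [lipschitzOnWith_iff_dist_le_mul]
      intro s hs t ht
      rw [hiso s hs t ht]
      simp [Real.dist_eq]
    exact this.continuousOn
  have hMclosed : IsClosed M := by
    have : M = ⋂ a ∈ A, (Icc 0 L ∩ ρ ⁻¹' (geo a)) := by
      ext t
      simp only [hM, mem_setOf_eq, mem_iInter, mem_inter_iff, mem_preimage]
      constructor
      · rintro ⟨h1, h2⟩ a ha; exact ⟨h1, h2 a ha⟩
      · intro h
        exact ⟨(h a0 ha0).1, fun a ha => (h a ha).2⟩
    rw [this]
    refine isClosed_biInter fun a ha => ?_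
    exact hcont.preimage_isClosed_of_isClosed isClosed_Icc (hgeoA a).compact'.isClosed
  set m := sSup M with hm
  have hmM : m ∈ M := hMclosed.csSup_mem hMne hMbdd
  have hdown : ∀ t ∈ M, ∀ s ∈ Icc (0:ℝ) t, s ∈ M := by
    intro t ht s hs
    refine ⟨⟨hs.1, le_trans hs.2 ht.1.2⟩, fun a ha => ?_⟩
    exact initial_seg hδ hiso hz (hgeoA a) ht.1 (ht.2 a ha) hs
  have hMIcc : M = Icc 0 m := by
    ext t
    constructor
    · intro ht
      exact ⟨ht.1.1, le_csSup hMbdd ht⟩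
    · intro ht
      exact hdown m hmM t ht
  set y := ρ m with hy
  have hdzy : dist z y = m := hdist m hmM.1
  set τ := ρ '' Icc 0 m with hτdef
  have hsubm : Icc (0:ℝ) m ⊆ Icc 0 L := Icc_subset_Icc (le_refl _) hmM.1.2
  have hτ : IsGeodesicSegment τ z y := by
    refine ⟨ρ, ?_, hz, ?_, ?_⟩ <;> rw [hdzy]
    · intro s hs t ht
      exact hiso s (hsubm hs) t (hsubm ht)
  have hInter : (⋂ a ∈ A, geo a) = τ := by
    ext p
    simp only [mem_iInter]
    constructor
    · intro hp
      have hp0 : p ∈ geo a0 := hp a0 ha0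
      rw [hσ0] at hp0
      obtain ⟨t, ht, rfl⟩ := hp0
      have htM : t ∈ M := ⟨ht, fun a ha => hp a ha⟩
      exact ⟨t, ⟨ht.1, le_csSup hMbdd htM⟩, rfl⟩
    · rintro ⟨t, ht, rfl⟩ a ha
      have : t ∈ M := hMIcc ▸ ht
      exact this.2 a ha
  refine ⟨y, ?_, ?_⟩
  · intro seg hseg σ hσ
    have h2 : σ = τ := geodesic_unique hδ hσ hτ
    rw [h2, ← hInter]
    exact iInter₂_congr fun a ha => geodesic_unique hδ (hseg a ha) (hgeoA a)
  · intro y' hy'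
    obtain ⟨σ', hσ'⟩ := hgeo z y'
    have he : (⋂ a ∈ A, geo a) = σ' := hy' geo (fun a ha => hgeoA a) σ' hσ'
    have hστ : σ' = τ := by rw [← he, hInter]
    exact endpoint_unique (hστ ▸ hσ') hτ
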